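/- For a Lie algebra L and r ∈ Im(1 − τ) ⊆ L ⊗ L, with Δ = Δ_r defined by Δ_r(x) = x·r, the co-Jacobi defect satisfies (1 + ξ + ξ²) ∘ (1 ⊗ Δ) ∘ Δ(x) = x · c(r) for all x ∈ L, where ξ is the cyclic permutation on L^{⊗3} and the action on L^{⊗3} is the adjoint diagonal action. -/

import Mathlib

open scoped TensorProduct
open scoped Classical

noncomputable section

variable {L : Type*} [LieRing L] [LieAlgebra ℂ L]

attribute [local instance] LieRing.ofAssociativeRing

/-- The bracket of `L` as a bilinear map. -/
def brMap (L : Type*) [LieRing L] [LieAlgebra ℂ L] : L →ₗ[ℂ] L →ₗ[ℂ] L :=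
  (LieAlgebra.ad ℂ L : L →ₗ⁅ℂ⁆ Module.End ℂ L).toLinearMap

/-- `c(r) = [r¹²,r¹³] + [r¹²,r²³] + [r¹³,r²³]` as an element of `L ⊗ L ⊗ L`. -/
def cybe (L : Type*) [LieRing L] [LieAlgebra ℂ L] (r : L ⊗[ℂ] L) : L ⊗[ℂ] (L ⊗[ℂ] L) :=
  let μ : L ⊗[ℂ] L →ₗ[ℂ] L := TensorProduct.lift (brMap L)
  let ttt := (TensorProduct.tensorTensorTensorComm ℂ L L L L).toLinearMap
  let c1 := (TensorProduct.map μ LinearMap.id) ∘ₗ ttt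
  let c2 := (TensorProduct.map LinearMap.id (TensorProduct.map μ LinearMap.id)) ∘ₗ
      (TensorProduct.map LinearMap.id (TensorProduct.assoc ℂ L L L).symm.toLinearMap) ∘ₗ
      (TensorProduct.assoc ℂ L L (L ⊗[ℂ] L)).toLinearMap
  let c3 := (TensorProduct.assoc ℂ L L L).toLinearMap ∘ₗ (TensorProduct.map LinearMap.id μ) ∘ₗ ttt
  c1 (r ⊗ₜ r) + c2 (r ⊗ₜ r) + c3 (r ⊗ₜ r)

/-- The twist map `τ : x ⊗ y ↦ y ⊗ x`. -/
def twist (L : Type*) [LieRing L] [LieAlgebra ℂ L] : L ⊗[ℂ] L →ₗ[ℂ] L ⊗[ℂ] L :=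
  (TensorProduct.comm ℂ L L).toLinearMap

/-- The cyclic map `ξ : x ⊗ y ⊗ z ↦ y ⊗ z ⊗ x`. -/
def cyc (L : Type*) [LieRing L] [LieAlgebra ℂ L] :
    L ⊗[ℂ] (L ⊗[ℂ] L) →ₗ[ℂ] L ⊗[ℂ] (L ⊗[ℂ] L) :=
  (TensorProduct.assoc ℂ L L L).toLinearMap ∘ₗ (TensorProduct.comm ℂ L (L ⊗[ℂ] L)).toLinearMap

/-- The coboundary `Δ_r : x ↦ x · r` as a linear map. -/
def DeltaR (r : L ⊗[ℂ] L) : L →ₗ[ℂ] L ⊗[ℂ] L where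
  toFun x := ⁅x, r⁆
  map_add' x y := add_lie x y r
  map_smul' c x := smul_lie c x r

/-! ### Auxiliary machinery for the proof -/

/-- Left-hand side as a function of `x`, `s` (first `r`) and `t` (second `r`). -/
def Ff (x : L) (s t : L ⊗[ℂ] L) : L ⊗[ℂ] (L ⊗[ℂ] L) :=
  ((LinearMap.id : L ⊗[ℂ] (L ⊗[ℂ] L) →ₗ[ℂ] L ⊗[ℂ] (L ⊗[ℂ] L)) + cyc L + cyc L ∘ₗ cyc L)
    ((TensorProduct.map (LinearMap.id : L →ₗ[ℂ] L) (DeltaR t)) ⁅x, s⁆)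

/-- Bilinear version of `cybe`. -/
def Cb (s t : L ⊗[ℂ] L) : L ⊗[ℂ] (L ⊗[ℂ] L) :=
  let μ : L ⊗[ℂ] L →ₗ[ℂ] L := TensorProduct.lift (brMap L)
  let ttt := (TensorProduct.tensorTensorTensorComm ℂ L L L L).toLinearMap
  let c1 := (TensorProduct.map μ LinearMap.id) ∘ₗ ttt
  let c2 := (TensorProduct.map LinearMap.id (TensorProduct.map μ LinearMap.id)) ∘ₗ
      (TensorProduct.map LinearMap.id (TensorProduct.assoc ℂ L L L).symm.toLinearMap) ∘ₗ
      (TensorProduct.assoc ℂ L L (L ⊗[ℂ] L)).toLinearMap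
  let c3 := (TensorProduct.assoc ℂ L L L).toLinearMap ∘ₗ (TensorProduct.map LinearMap.id μ) ∘ₗ ttt
  c1 (s ⊗ₜ t) + c2 (s ⊗ₜ t) + c3 (s ⊗ₜ t)

/-- Right-hand side as a function of `x`, `s`, `t`. -/
def Gg (x : L) (s t : L ⊗[ℂ] L) : L ⊗[ℂ] (L ⊗[ℂ] L) := ⁅x, Cb s t⁆

lemma DeltaR_add (t t' : L ⊗[ℂ] L) : (DeltaR (t + t') : L →ₗ[ℂ] L ⊗[ℂ] L)
    = DeltaR t + DeltaR t' := LinearMap.ext fun y => lie_add y t t'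

lemma DeltaR_zero : (DeltaR (0 : L ⊗[ℂ] L)) = 0 := LinearMap.ext fun y => lie_zero y

lemma Ff_add_left (x : L) (s s' t : L ⊗[ℂ] L) :
    Ff x (s + s') t = Ff x s t + Ff x s' t := by
  simp [Ff, lie_add, map_add]

lemma Ff_add_right (x : L) (s t t' : L ⊗[ℂ] L) :
    Ff x s (t + t') = Ff x s t + Ff x s t' := by
  simp [Ff, DeltaR_add, TensorProduct.map_add_right, map_add, LinearMap.add_apply]

lemma Ff_zero_left (x : L) (t : L ⊗[ℂ] L) : Ff x 0 t = 0 := by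
  simp [Ff]

lemma Ff_zero_right (x : L) (s : L ⊗[ℂ] L) : Ff x s 0 = 0 := by
  simp [Ff, DeltaR_zero, TensorProduct.map_zero_right]

lemma Cb_add_left (s s' t : L ⊗[ℂ] L) : Cb (s + s') t = Cb s t + Cb s' t := by
  simp only [Cb, TensorProduct.add_tmul, map_add]
  abel

lemma Cb_add_right (s t t' : L ⊗[ℂ] L) : Cb s (t + t') = Cb s t + Cb s t' := by
  simp only [Cb, TensorProduct.tmul_add, map_add]
  abel

lemma Cb_zero_left (t : L ⊗[ℂ] L) : Cb 0 t = 0 := by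
  simp [Cb, TensorProduct.zero_tmul]

lemma Cb_zero_right (s : L ⊗[ℂ] L) : Cb s 0 = 0 := by
  simp [Cb, TensorProduct.tmul_zero]

lemma Gg_add_left (x : L) (s s' t : L ⊗[ℂ] L) :
    Gg x (s + s') t = Gg x s t + Gg x s' t := by
  simp [Gg, Cb_add_left, lie_add]

lemma Gg_add_right (x : L) (s t t' : L ⊗[ℂ] L) :
    Gg x s (t + t') = Gg x s t + Gg x s t' := by
  simp [Gg, Cb_add_right, lie_add]

lemma Gg_zero_left (x : L) (t : L ⊗[ℂ] L) : Gg x 0 t = 0 := by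
  simp [Gg, Cb_zero_left]

lemma Gg_zero_right (x : L) (s : L ⊗[ℂ] L) : Gg x s 0 = 0 := by
  simp [Gg, Cb_zero_right]

/-- The key identity on pure tensors. -/
lemma key_pure (x a b c d : L) :
    Ff x (a ⊗ₜ[ℂ] b - b ⊗ₜ[ℂ] a) (c ⊗ₜ[ℂ] d - d ⊗ₜ[ℂ] c)
      + Ff x (c ⊗ₜ[ℂ] d - d ⊗ₜ[ℂ] c) (a ⊗ₜ[ℂ] b - b ⊗ₜ[ℂ] a)
    = Gg x (a ⊗ₜ[ℂ] b - b ⊗ₜ[ℂ] a) (c ⊗ₜ[ℂ] d - d ⊗ₜ[ℂ] c)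
      + Gg x (c ⊗ₜ[ℂ] d - d ⊗ₜ[ℂ] c) (a ⊗ₜ[ℂ] b - b ⊗ₜ[ℂ] a) := by
  simp only [Ff, Gg, Cb, DeltaR, twist, cyc, brMap, LinearMap.comp_apply, LinearMap.add_apply,
    LinearMap.id_coe, id_eq, LinearEquiv.coe_coe, TensorProduct.comm_tmul,
    TensorProduct.assoc_tmul, TensorProduct.assoc_symm_tmul, TensorProduct.map_tmul,
    TensorProduct.lift.tmul, LieHom.coe_toLinearMap, LieAlgebra.ad_apply,
    TensorProduct.tensorTensorTensorComm_tmul, TensorProduct.LieModule.lie_tmul_right,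
    lie_sub, lie_add, lie_neg, sub_lie, add_lie, neg_lie,
    TensorProduct.tmul_sub, TensorProduct.sub_tmul, TensorProduct.tmul_add,
    TensorProduct.add_tmul, TensorProduct.tmul_neg, TensorProduct.neg_tmul,
    map_sub, map_add, map_neg, LinearMap.coe_mk, AddHom.coe_mk]
  have sk : ∀ p q : L, ⁅⁅x, p⁆, q⁆ = -⁅q, ⁅x, p⁆⁆ := fun p q => (lie_skew ⁅x, p⁆ q).symm
  have leib : ∀ p q : L, ⁅x, ⁅p, q⁆⁆ = ⁅p, ⁅x, q⁆⁆ - ⁅q, ⁅x, p⁆⁆ := fun p q => by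
    rw [leibniz_lie, ← lie_skew ⁅x, p⁆ q]; abel
  have hca : ⁅c, a⁆ = -⁅a, c⁆ := neg_eq_iff_eq_neg.mp (lie_skew a c)
  have hcb : ⁅c, b⁆ = -⁅b, c⁆ := neg_eq_iff_eq_neg.mp (lie_skew b c)
  have hda : ⁅d, a⁆ = -⁅a, d⁆ := neg_eq_iff_eq_neg.mp (lie_skew a d)
  have hdb : ⁅d, b⁆ = -⁅b, d⁆ := neg_eq_iff_eq_neg.mp (lie_skew b d)
  simp only [hca, hcb, hda, hdb, lie_neg, leib, sk, neg_neg,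
    TensorProduct.tmul_neg, TensorProduct.neg_tmul, TensorProduct.tmul_sub,
    TensorProduct.sub_tmul, TensorProduct.tmul_add, TensorProduct.add_tmul]
  module

/-- The key identity for skew elements in the image of `1 - τ`. -/
lemma key (x : L) (u v : L ⊗[ℂ] L) :
    Ff x (u - twist L u) (v - twist L v) + Ff x (v - twist L v) (u - twist L u)
    = Gg x (u - twist L u) (v - twist L v) + Gg x (v - twist L v) (u - twist L u) := by
  induction u using TensorProduct.induction_on with
  | zero =>
      simp [Ff_zero_left, Ff_zero_right, Gg_zero_left, Gg_zero_right]
  | add u₁ u₂ h₁ h₂ =>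
      have hP : (u₁ + u₂) - twist L (u₁ + u₂)
          = (u₁ - twist L u₁) + (u₂ - twist L u₂) := by
        rw [map_add]; abel
      rw [hP, Ff_add_left, Ff_add_right, Gg_add_left, Gg_add_right]
      have h := congrArg₂ (· + ·) h₁ h₂
      abel_nf at h ⊢
      exact h
  | tmul a b =>
      induction v using TensorProduct.induction_on with
      | zero =>
          simp [Ff_zero_left, Ff_zero_right, Gg_zero_left, Gg_zero_right]
      | add v₁ v₂ h₁ h₂ =>
          have hP : (v₁ + v₂) - twist L (v₁ + v₂)
              = (v₁ - twist L v₁) + (v₂ - twist L v₂) := by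
            rw [map_add]; abel
          rw [hP, Ff_add_left, Ff_add_right, Gg_add_left, Gg_add_right]
          have h := congrArg₂ (· + ·) h₁ h₂
          abel_nf at h ⊢
          exact h
      | tmul c d =>
          have h1 : twist L (a ⊗ₜ[ℂ] b) = b ⊗ₜ[ℂ] a := rfl
          have h2 : twist L (c ⊗ₜ[ℂ] d) = d ⊗ₜ[ℂ] c := rfl
          rw [h1, h2]
          exact key_pure x a b c d

/-- For `r ∈ Im(1 − τ)` and `Δ = Δ_r`, the co-Jacobi defect satisfies
`(1 + ξ + ξ²) ∘ (1 ⊗ Δ) ∘ Δ (x) = x · c(r)`. -/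
theorem coJacobi_defect_eq_action_on_cybe
    (L : Type*) [LieRing L] [LieAlgebra ℂ L] (r : L ⊗[ℂ] L)
    (hr : r ∈ LinearMap.range (LinearMap.id - twist L)) (x : L) :
    ((LinearMap.id + cyc L + cyc L ∘ₗ cyc L) ∘ₗ
        TensorProduct.map LinearMap.id (DeltaR r) ∘ₗ DeltaR r) x
      = ⁅x, cybe L r⁆ := by
  obtain ⟨u, hu⟩ := hr
  have hru : r = u - twist L u := by
    rw [← hu]; simp [LinearMap.sub_apply]
  have hk : Ff x r r + Ff x r r = Gg x r r + Gg x r r := by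
    rw [hru]; exact key x u u
  have h2 : (2 : ℂ) • Ff x r r = (2 : ℂ) • Gg x r r := by
    rw [two_smul, two_smul]; exact hk
  have hFG : Ff x r r = Gg x r r := by
    have := congrArg (fun z => (2 : ℂ)⁻¹ • z) h2
    simpa [inv_smul_smul₀ (two_ne_zero' ℂ)] using this
  have hL : ((LinearMap.id + cyc L + cyc L ∘ₗ cyc L) ∘ₗ
        TensorProduct.map LinearMap.id (DeltaR r) ∘ₗ DeltaR r) x = Ff x r r := rfl
  have hR : ⁅x, cybe L r⁆ = Gg x r r := rfl
  rw [hL, hR, hFG]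

end
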